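/- Consider A_1 = [[0,1,0],[0,0,1],[0,0,0]] and A_2 = [[0,0,0],[0,0,0],[1,0,0]]. Then the joint spectral radius satisfies ρ_d(A_1, A_2) = 1, while ρ_p(ν, P, (A_1,A_2)) = 0 for every 2×2 stochastic matrix P and every invariant probability ν for P; in particular ρ_p((A_1,A_2)) = 0 < ρ_d((A_1,A_2)). -/

import Mathlib

open scoped BigOperators

noncomputable section
namespace JSRpaper

attribute [local instance] Matrix.linftyOpNormedRing

/-- Spectral radius of a real matrix: maximum modulus of its complex eigenvalues. -/
def specRad {n : Type*} [Fintype n] [DecidableEq n] (M : Matrix n n ℝ) : ℝ :=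
  ⨆ μ ∈ spectrum ℂ (M.map (algebraMap ℝ ℂ)), ‖μ‖

/-- Product `A_{i_n} ⋯ A_{i_1}` along the word `w = (i_1, …, i_n)`. -/
def prodW {d : ℕ} {ι : Type*} {n : ℕ} (A : ι → Matrix (Fin d) (Fin d) ℝ)
    (w : Fin n → ι) : Matrix (Fin d) (Fin d) ℝ :=
  ((List.ofFn w).map A).reverse.prod

/-- Deterministic joint spectral radius. -/
def jsr {d : ℕ} {ι : Type*} [Fintype ι] (A : ι → Matrix (Fin d) (Fin d) ℝ) : ℝ :=
  ⨅ n : ℕ, ⨆ w : Fin (n + 1) → ι, ‖prodW A w‖ ^ (((n : ℝ) + 1)⁻¹)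

def IsStochastic {ι : Type*} [Fintype ι] (P : Matrix ι ι ℝ) : Prop :=
  (∀ i j, 0 ≤ P i j) ∧ ∀ i, ∑ j, P i j = 1

def IsInvProb {ι : Type*} [Fintype ι] (ν : ι → ℝ) (P : Matrix ι ι ℝ) : Prop :=
  (∀ i, 0 ≤ ν i) ∧ (∑ i, ν i = 1) ∧ ∀ j, ∑ i, ν i * P i j = ν j

/-- Markov weight `ν_{i_1} p_{i_1 i_2} ⋯ p_{i_n i_{n+1}}` of the word `w = (i_1, …, i_{n+1})`. -/
def chainWt {ι : Type*} [Fintype ι] (ν : ι → ℝ) (P : Matrix ι ι ℝ) {n : ℕ}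
    (w : Fin (n + 1) → ι) : ℝ :=
  ν (w 0) * ∏ t : Fin n, P (w t.castSucc) (w t.succ)

/-- Probabilistic joint spectral radius associated with the Markov chain `(ν, P)`. -/
def rhoP {d : ℕ} {ι : Type*} [Fintype ι] [DecidableEq ι] (ν : ι → ℝ) (P : Matrix ι ι ℝ)
    (A : ι → Matrix (Fin d) (Fin d) ℝ) : ℝ :=
  Filter.atTop.limsup fun n : ℕ =>
    ∑ w : Fin (n + 1) → ι, chainWt ν P w * ‖prodW A w‖ ^ (((n : ℝ) + 1)⁻¹)

/-- `ρ_p(P, A)`: supremum over invariant probabilities of `P`. -/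
def rhoPP {d : ℕ} {ι : Type*} [Fintype ι] [DecidableEq ι] (P : Matrix ι ι ℝ)
    (A : ι → Matrix (Fin d) (Fin d) ℝ) : ℝ :=
  sSup {r | ∃ ν, IsInvProb ν P ∧ r = rhoP ν P A}

/-- `ρ_p(A)`: supremum over all pairs `(ν, P)`. -/
def rhoPsup {d : ℕ} {ι : Type*} [Fintype ι] [DecidableEq ι]
    (A : ι → Matrix (Fin d) (Fin d) ℝ) : ℝ :=
  sSup {r | ∃ ν P, IsStochastic P ∧ IsInvProb ν P ∧ r = rhoP ν P A}

/-- `(i_1, …, i_{k+1})` is a `P`-word. -/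
def IsPWord {ι : Type*} (P : Matrix ι ι ℝ) {k : ℕ} (w : Fin (k + 1) → ι) : Prop :=
  ∀ t : Fin k, 0 < P (w t.castSucc) (w t.succ)

/-- `(i_1, …, i_{k+1})` is a `P`-cycle. -/
def IsPCycle {ι : Type*} (P : Matrix ι ι ℝ) {k : ℕ} (w : Fin (k + 1) → ι) : Prop :=
  IsPWord P w ∧ 0 < P (w (Fin.last k)) (w 0)

/-- `(i_1, …, i_{k+1})` is a `(ν, P)`-cycle. -/
def IsNuPCycle {ι : Type*} (ν : ι → ℝ) (P : Matrix ι ι ℝ) {k : ℕ}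
    (w : Fin (k + 1) → ι) : Prop :=
  IsPCycle P w ∧ 0 < ν (w 0)

/-- `P` is strongly connected: its directed graph (positive entries) is strongly connected. -/
def StronglyConnected {ι : Type*} (P : Matrix ι ι ℝ) : Prop :=
  ∀ i j : ι, ∃ (k : ℕ) (w : Fin (k + 1) → ι), w 0 = i ∧ w (Fin.last k) = j ∧ IsPWord P w

/-- The `N`-tuple `A` is irreducible. -/
def IrredTuple {d : ℕ} {ι : Type*} (A : ι → Matrix (Fin d) (Fin d) ℝ) : Prop :=
  ∀ V : Submodule ℝ (Fin d → ℝ), (∀ i, ∀ x ∈ V, (A i).mulVec x ∈ V) → V = ⊥ ∨ V = ⊤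

/-- `nB` is a Barabanov norm for `A`. -/
structure IsBarabanovNorm {d : ℕ} {ι : Type*} [Fintype ι]
    (A : ι → Matrix (Fin d) (Fin d) ℝ) (nB : (Fin d → ℝ) → ℝ) : Prop where
  nonneg : ∀ x, 0 ≤ nB x
  eq_zero_iff : ∀ x, nB x = 0 ↔ x = 0
  add_le : ∀ x y, nB (x + y) ≤ nB x + nB y
  smul : ∀ (c : ℝ) (x), nB (c • x) = |c| * nB x
  extremal : ∀ i x, nB ((A i).mulVec x) ≤ jsr A * nB x
  attain : ∀ (x : Fin d → ℝ) (k : ℕ), ∃ σ : ℕ → ι,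
    nB ((prodW A fun t : Fin k => σ (t.1 + 1)).mulVec x) = jsr A ^ k * nB x

/-- Matrix norm induced by the vector norm `nB`. -/
def indNorm {d : ℕ} (nB : (Fin d → ℝ) → ℝ) (M : Matrix (Fin d) (Fin d) ℝ) : ℝ :=
  sSup {r | ∃ x, nB x = 1 ∧ r = nB (M.mulVec x)}

/-- Stochastic tensor of order `m + 2` (a Markov chain of order `m + 1`). -/
def IsStochasticTensor {N m : ℕ} (P : (Fin (m + 1) → Fin N) → Fin N → ℝ) : Prop :=
  (∀ u j, 0 ≤ P u j) ∧ ∀ u, ∑ j, P u j = 1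

/-- Shift-invariant probability tensor for the order-`m + 1` chain `P`. -/
def IsInvProbTensor {N m : ℕ} (ν : (Fin (m + 1) → Fin N) → ℝ)
    (P : (Fin (m + 1) → Fin N) → Fin N → ℝ) : Prop :=
  (∀ u, 0 ≤ ν u) ∧ (∑ u, ν u = 1) ∧
    ∀ u : Fin (m + 1) → Fin N,
      ∑ i : Fin N, ν (Fin.cons i (Fin.init u)) *
        P (Fin.cons i (Fin.init u)) (u (Fin.last m)) = ν u

/-- Probabilistic joint spectral radius for a Markov chain of order `m + 1`. -/
def rhoPTensor {d N m : ℕ} (ν : (Fin (m + 1) → Fin N) → ℝ)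
    (P : (Fin (m + 1) → Fin N) → Fin N → ℝ)
    (A : Fin N → Matrix (Fin d) (Fin d) ℝ) : ℝ :=
  Filter.atTop.limsup fun n : ℕ =>
    ∑ w : Fin (n + m + 2) → Fin N,
      (ν (fun j : Fin (m + 1) => w ⟨j.1, by omega⟩) *
        ∏ t : Fin (n + 1),
          P (fun j : Fin (m + 1) => w ⟨t.1 + j.1, by omega⟩) (w ⟨t.1 + m + 1, by omega⟩)) *
      ‖prodW A w‖ ^ (((n : ℝ) + m + 2)⁻¹)

/-- `ρ_p(m, A)`: supremum over all order-`m + 1` Markov chains. -/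
def rhoPTensorSup {d N : ℕ} (m : ℕ) (A : Fin N → Matrix (Fin d) (Fin d) ℝ) : ℝ :=
  sSup {r | ∃ ν P, IsStochasticTensor P ∧ IsInvProbTensor ν P ∧ r = rhoPTensor (m := m) ν P A}



section Aux15
open Matrix

def M1 : Matrix (Fin 3) (Fin 3) ℝ := !![0, 1, 0; 0, 0, 1; 0, 0, 0]
def M2 : Matrix (Fin 3) (Fin 3) ℝ := !![0, 0, 0; 0, 0, 0; 1, 0, 0]
def AA : Fin 2 → Matrix (Fin 3) (Fin 3) ℝ := ![M1, M2]
def e (r c : Fin 3) : Matrix (Fin 3) (Fin 3) ℝ := single r c 1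

def q (s : Fin 3) (m : ℕ) : Fin 2 := if (m + s.1) % 3 = 0 then 1 else 0
def pat (s : Fin 3) (n : ℕ) : Fin (n+1) → Fin 2 := fun t => q s t.1
def rowOf (m : ℕ) : Fin 3 := if m % 3 = 0 then 0 else if m % 3 = 1 then 2 else 1
def pm (s : Fin 3) (n : ℕ) : Matrix (Fin 3) (Fin 3) ℝ :=
  if n = 0 ∧ s ≠ 0 then M1 else e (rowOf (n+1+s.1)) (rowOf s.1)

lemma M1_eq : M1 = e 0 1 + e 1 2 := by
  ext i j; fin_cases i <;> fin_cases j <;>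
    simp [M1, e, Matrix.single, Matrix.vecHead, Matrix.vecTail]
lemma M2_eq : M2 = e 2 0 := by
  ext i j; fin_cases i <;> fin_cases j <;>
    simp [M2, e, Matrix.single, Matrix.vecHead, Matrix.vecTail]

lemma e_mul_e (a b c d : Fin 3) : e a b * e c d = if b = c then e a d else 0 := by
  split
  · subst ‹b = c›; simpa [e] using Matrix.single_mul_single_same a b d (1:ℝ) (1:ℝ)
  · exact Matrix.single_mul_single_of_ne (h := ‹b ≠ c›) (c := (1:ℝ)) (d := (1:ℝ)) a

lemma M1_mul_e (r c : Fin 3) :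
    M1 * e r c = if r = 1 then e 0 c else if r = 2 then e 1 c else 0 := by
  rw [M1_eq, add_mul, e_mul_e, e_mul_e]; fin_cases r <;> simp

lemma M2_mul_e (r c : Fin 3) : M2 * e r c = if r = 0 then e 2 c else 0 := by
  rw [M2_eq, e_mul_e]; fin_cases r <;> simp

lemma e_ne_zero (r c : Fin 3) : e r c ≠ 0 := by
  intro h
  have := congrFun (congrFun h r) c
  simp [e, Matrix.single] at this

lemma prodW_one {d : ℕ} {ι : Type*} (A : ι → Matrix (Fin d) (Fin d) ℝ) (w : Fin 1 → ι) :
    prodW A w = A (w 0) := by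
  simp [prodW]

lemma prodW_succ {d n : ℕ} {ι : Type*} (A : ι → Matrix (Fin d) (Fin d) ℝ)
    (w : Fin (n+2) → ι) :
    prodW A w = A (w (Fin.last (n+1))) * prodW A (fun t : Fin (n+1) => w t.castSucc) := by
  rw [prodW, prodW, List.ofFn_succ', List.map_concat, List.concat_eq_append,
    List.reverse_append]
  simp

lemma prod_pat (s : Fin 3) (n : ℕ) : prodW AA (pat s n) = pm s n := by
  induction n with
  | zero =>
    fin_cases s <;>
      simp [prodW_one, pat, q, pm, AA, rowOf, M2_eq]
  | succ n ih =>
    rw [prodW_succ]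
    have hc : (fun t : Fin (n+1) => pat s (n+1) t.castSucc) = pat s n := rfl
    rw [hc, ih]
    have hlast : pat s (n+1) (Fin.last (n+1)) = q s (n+1) := rfl
    rw [hlast]
    by_cases hns : n = 0 ∧ s ≠ 0
    · obtain ⟨rfl, hs⟩ := hns
      fin_cases s
      · exact absurd rfl hs
      · -- s = 1
        show AA (q 1 1) * pm 1 0 = pm 1 1
        have : q 1 1 = 0 := by norm_num [q]
        rw [this]
        show M1 * pm 1 0 = pm 1 1
        simp only [pm, rowOf]
        simp only [M1_eq]
        rw [if_pos (by simp), if_neg (by simp)]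
        norm_num
        rw [add_mul, mul_add, mul_add, e_mul_e, e_mul_e, e_mul_e, e_mul_e]
        simp
      · show AA (q 2 1) * pm 2 0 = pm 2 1
        have : q 2 1 = 1 := by norm_num [q]
        rw [this]
        show M2 * pm 2 0 = pm 2 1
        simp only [pm, rowOf]
        rw [if_pos (by simp), if_neg (by simp)]
        norm_num
        rw [M1_eq, M2_eq, mul_add, e_mul_e, e_mul_e]
        simp
    · have hpm : pm s n = e (rowOf (n+1+s.1)) (rowOf s.1) := by
        rw [pm, if_neg hns]
      have hpm' : pm s (n+1) = e (rowOf (n+2+s.1)) (rowOf s.1) := by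
        rw [pm, if_neg (by simp)]
      rw [hpm, hpm']
      rcases (by omega : (n+1+s.1) % 3 = 0 ∨ (n+1+s.1) % 3 = 1 ∨ (n+1+s.1) % 3 = 2) with h | h | h
      · have hq : q s (n+1) = 1 := by simp [q, h]
        have h1 : rowOf (n+1+s.1) = 0 := by simp [rowOf, h]
        have h2 : rowOf (n+2+s.1) = 2 := by
          have : (n+2+s.1) % 3 = 1 := by omega
          simp [rowOf, this]
        rw [hq, h1, h2]
        show M2 * e 0 _ = _
        rw [M2_mul_e]; simp
      · have hq : q s (n+1) = 0 := by simp [q, h]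
        have h1 : rowOf (n+1+s.1) = 2 := by simp [rowOf, h]
        have h2 : rowOf (n+2+s.1) = 1 := by
          have : (n+2+s.1) % 3 = 2 := by omega
          simp [rowOf, this]
        rw [hq, h1, h2]
        show M1 * e 2 _ = _
        rw [M1_mul_e]; simp
      · have hq : q s (n+1) = 0 := by simp [q, h]
        have h1 : rowOf (n+1+s.1) = 1 := by simp [rowOf, h]
        have h2 : rowOf (n+2+s.1) = 0 := by
          have : (n+2+s.1) % 3 = 0 := by omega
          simp [rowOf, this]
        rw [hq, h1, h2]
        show M1 * e 1 _ = _
        rw [M1_mul_e]; simp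


lemma fin2_cases (x : Fin 2) : x = 0 ∨ x = 1 := by
  fin_cases x <;> simp

lemma classify : ∀ {n : ℕ} (w : Fin (n+1) → Fin 2), prodW AA w ≠ 0 → ∃ s : Fin 3, w = pat s n := by
  intro n
  induction n with
  | zero =>
    intro w _
    rcases fin2_cases (w 0) with h0 | h0
    · refine ⟨1, funext fun t => ?_⟩
      have ht : t = 0 := Fin.ext (by omega)
      rw [ht, h0]; rfl
    · refine ⟨0, funext fun t => ?_⟩
      have ht : t = 0 := Fin.ext (by omega)
      rw [ht, h0]; rfl
  | succ n ih =>
    intro w h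
    rw [prodW_succ] at h
    have h2 : prodW AA (fun t : Fin (n+1) => w t.castSucc) ≠ 0 := by
      intro hz; rw [hz, mul_zero] at h; exact h rfl
    obtain ⟨s, hs⟩ := ih _ h2
    rw [hs, prod_pat] at h
    by_cases hns : n = 0 ∧ s ≠ 0
    · obtain ⟨rfl, hs0⟩ := hns
      rw [pm, if_pos ⟨rfl, hs0⟩] at h
      have hw0 : w 0 = 0 := by
        have := congrFun hs 0
        rw [show ((0 : Fin 1).castSucc) = (0 : Fin 2) from rfl] at this
        rw [this]
        have hs1 : s.1 ≠ 0 := fun hc => hs0 (Fin.ext hc)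
        have hlt := s.isLt
        have hq : ¬ ((0:ℕ) + s.1) % 3 = 0 := by omega
        simp [pat, q]; omega
      rcases fin2_cases (w (Fin.last 1)) with hl | hl
      · refine ⟨1, funext fun t => ?_⟩
        fin_cases t
        · rw [show (⟨0, by omega⟩ : Fin 2) = (0 : Fin 2) from rfl, hw0]; rfl
        · rw [show (⟨1, by omega⟩ : Fin 2) = Fin.last 1 from rfl, hl]; rfl
      · refine ⟨2, funext fun t => ?_⟩
        fin_cases t
        · rw [show (⟨0, by omega⟩ : Fin 2) = (0 : Fin 2) from rfl, hw0]; rfl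
        · rw [show (⟨1, by omega⟩ : Fin 2) = Fin.last 1 from rfl, hl]; rfl
    · rw [pm, if_neg hns] at h
      refine ⟨s, funext fun t => ?_⟩
      have hlet : w (Fin.last (n+1)) = q s (n+1) := by
        rcases fin2_cases (w (Fin.last (n+1))) with hl | hl <;> rw [hl] at h ⊢ <;>
          rcases (by omega : (n+1+s.1) % 3 = 0 ∨ (n+1+s.1) % 3 = 1 ∨ (n+1+s.1) % 3 = 2)
            with hm | hm | hm <;>
          simp only [AA, Matrix.cons_val_zero, Matrix.cons_val_one, Matrix.head_cons,
            M1_mul_e, M2_mul_e, rowOf, hm, q] at h ⊢ <;>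
          simp_all
      refine Fin.lastCases ?_ ?_ t
      · rw [hlet]; rfl
      · intro i
        have := congrFun hs i
        rw [this]; rfl


lemma norm_e (r c : Fin 3) : ‖e r c‖ = 1 := by
  rw [e, Matrix.linfty_opNorm_def]
  fin_cases r <;> fin_cases c <;>
    simp [Matrix.single, Fin.sum_univ_three, Fin.univ_succ]

lemma norm_M1 : ‖M1‖ = 1 := by
  rw [Matrix.linfty_opNorm_def]
  simp [M1, Fin.sum_univ_three, Fin.univ_succ, Matrix.vecHead, Matrix.vecTail]

lemma norm_M2 : ‖M2‖ = 1 := by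
  rw [Matrix.linfty_opNorm_def]
  simp [M2, Fin.sum_univ_three, Fin.univ_succ, Matrix.vecHead, Matrix.vecTail]

lemma norm_AA_le (i : Fin 2) : ‖AA i‖ ≤ 1 := by
  fin_cases i
  · exact le_of_eq norm_M1
  · exact le_of_eq norm_M2

lemma norm_list_prod_le : ∀ l : List (Fin 2), l ≠ [] → ‖(l.map AA).prod‖ ≤ 1 := by
  intro l
  induction l with
  | nil => intro h; exact absurd rfl h
  | cons i l ih =>
    intro _
    rcases eq_or_ne l [] with rfl | hl
    · simpa using norm_AA_le i
    · calc ‖((i :: l).map AA).prod‖ = ‖AA i * (l.map AA).prod‖ := by simp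
        _ ≤ ‖AA i‖ * ‖(l.map AA).prod‖ := norm_mul_le _ _
        _ ≤ 1 * 1 := by
            have h1 := norm_AA_le i
            have h2 := ih hl
            have := norm_nonneg ((l.map AA).prod)
            nlinarith [norm_nonneg (AA i)]
        _ = 1 := one_mul 1

lemma norm_prodW_le {n : ℕ} (w : Fin (n+1) → Fin 2) : ‖prodW AA w‖ ≤ 1 := by
  have : prodW AA w = (((List.ofFn w).reverse).map AA).prod := by
    rw [prodW, List.map_reverse]
  rw [this]
  apply norm_list_prod_le
  simp

lemma norm_prodW_pat0 (n : ℕ) : ‖prodW AA (pat 0 n)‖ = 1 := by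
  rw [prod_pat, pm, if_neg (by simp)]
  exact norm_e _ _

lemma jsr_AA : jsr AA = 1 := by
  have key : ∀ n : ℕ, (⨆ w : Fin (n + 1) → Fin 2, ‖prodW AA w‖ ^ (((n : ℝ) + 1)⁻¹)) = 1 := by
    intro n
    apply le_antisymm
    · apply ciSup_le
      intro w
      exact Real.rpow_le_one (norm_nonneg _) (norm_prodW_le w) (by positivity)
    · have h1 : (1:ℝ) = ‖prodW AA (pat 0 n)‖ ^ (((n : ℝ) + 1)⁻¹) := by
        rw [norm_prodW_pat0 n, Real.one_rpow]
      exact h1.le.trans <| le_ciSup (f := fun w : Fin (n+1) → Fin 2 => ‖prodW AA w‖ ^ (((n : ℝ) + 1)⁻¹))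
        (Set.Finite.bddAbove (Set.finite_range _)) (pat 0 n)
  rw [jsr]
  have : (fun n : ℕ => ⨆ w : Fin (n + 1) → Fin 2, ‖prodW AA w‖ ^ (((n : ℝ) + 1)⁻¹))
      = fun _ : ℕ => (1:ℝ) := funext key
  rw [iInf, this]
  simp





section Prob
variable {P : Matrix (Fin 2) (Fin 2) ℝ} {ν : Fin 2 → ℝ}

lemma entry_le_one (hP : IsStochastic P) (i j : Fin 2) : P i j ≤ 1 := by
  have h := hP.2 i
  rw [Fin.sum_univ_two] at h
  rcases fin2_cases j with rfl | rfl
  · have := hP.1 i 1; linarith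
  · have := hP.1 i 0; linarith

lemma q_congr (s : Fin 3) {a b : ℕ} (hab : a % 3 = b % 3) : q s a = q s b := by
  simp only [q]
  rw [show (a+s.1) % 3 = (b+s.1) % 3 from by omega]

lemma triple_le (hP : IsStochastic P) (s : Fin 3) (m : ℕ) :
    P (q s (3*m+0)) (q s (3*m+0+1)) * P (q s (3*m+1)) (q s (3*m+1+1)) *
      P (q s (3*m+2)) (q s (3*m+2+1)) ≤ 1/4 := by
  simp only [q_congr s (show (3*m+0) % 3 = 0 % 3 by omega),
    q_congr s (show (3*m+0+1) % 3 = 1 % 3 by omega),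
    q_congr s (show (3*m+1) % 3 = 1 % 3 by omega),
    q_congr s (show (3*m+1+1) % 3 = 2 % 3 by omega),
    q_congr s (show (3*m+2) % 3 = 2 % 3 by omega),
    q_congr s (show (3*m+2+1) % 3 = 0 % 3 by omega)]
  have h0 := hP.2 0
  rw [Fin.sum_univ_two] at h0
  have h00 := hP.1 0 0
  have h01 := hP.1 0 1
  have hlt := s.isLt
  rcases (by omega : s.1 = 0 ∨ s.1 = 1 ∨ s.1 = 2) with hv | hv | hv <;>
  · have e0 : q s 0 = (if (0 + s.1) % 3 = 0 then 1 else 0) := rfl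
    have e1 : q s 1 = (if (1 + s.1) % 3 = 0 then 1 else 0) := rfl
    have e2 : q s 2 = (if (2 + s.1) % 3 = 0 then 1 else 0) := rfl
    rw [e0, e1, e2]
    simp only [hv]
    norm_num
    have hxy : P 0 0 * P 0 1 ≤ 1/4 := by nlinarith [sq_nonneg (P 0 0 - P 0 1)]
    nlinarith [mul_nonneg (sub_nonneg.mpr (entry_le_one hP 1 0)) (mul_nonneg h00 h01), hxy,
      mul_nonneg h00 h01, hP.1 1 0]

lemma prod_range_le (hP : IsStochastic P) (s : Fin 3) (m : ℕ) :
    ∏ t ∈ Finset.range (3*m), P (q s t) (q s (t+1)) ≤ (1/4 : ℝ)^m := by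
  induction m with
  | zero => simp
  | succ m ih =>
    rw [show 3*(m+1) = 3*m + 3 by ring, Finset.prod_range_add]
    have htr : (∏ i ∈ Finset.range 3, P (q s (3*m+i)) (q s (3*m+i+1))) ≤ 1/4 := by
      simp only [Finset.prod_range_succ, Finset.prod_range_zero, one_mul]
      exact triple_le hP s m
    have hnn : (0:ℝ) ≤ ∏ i ∈ Finset.range 3, P (q s (3*m+i)) (q s (3*m+i+1)) :=
      Finset.prod_nonneg fun i _ => hP.1 _ _
    calc (∏ t ∈ Finset.range (3*m), P (q s t) (q s (t+1))) *
          ∏ i ∈ Finset.range 3, P (q s (3*m+i)) (q s (3*m+i+1))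
        ≤ (1/4:ℝ)^m * (1/4) := mul_le_mul ih htr hnn (by positivity)
      _ = (1/4:ℝ)^(m+1) := (pow_succ _ _).symm

lemma chainWt_pat_le (hP : IsStochastic P) (hν : IsInvProb ν P) (s : Fin 3) (n : ℕ) :
    chainWt ν P (pat s n) ≤ (1/4 : ℝ)^(n/3) := by
  have hν1 : ν (pat s n 0) ≤ 1 := by
    rw [← hν.2.1]
    exact Finset.single_le_sum (fun i _ => hν.1 i) (Finset.mem_univ _)
  have hprod : (∏ t : Fin n, P (pat s n t.castSucc) (pat s n t.succ)) ≤ (1/4 : ℝ)^(n/3) := by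
    have heq : (∏ t : Fin n, P (pat s n t.castSucc) (pat s n t.succ))
        = ∏ t ∈ Finset.range n, P (q s t) (q s (t+1)) := by
      rw [Finset.prod_range fun t => P (q s t) (q s (t+1))]
      rfl
    rw [heq]
    obtain ⟨m, k, hk, rfl⟩ : ∃ m k, k < 3 ∧ n = 3*m+k := ⟨n/3, n%3, by omega, by omega⟩
    have hm : (3*m+k)/3 = m := by omega
    rw [hm, Finset.prod_range_add]
    have h2 : (∏ i ∈ Finset.range k, P (q s (3*m+i)) (q s (3*m+i+1))) ≤ 1 :=
      Finset.prod_le_one (fun i _ => hP.1 _ _) (fun i _ => entry_le_one hP _ _)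
    have h1 := prod_range_le hP s m
    have hnn : (0:ℝ) ≤ ∏ i ∈ Finset.range k, P (q s (3*m+i)) (q s (3*m+i+1)) :=
      Finset.prod_nonneg fun i _ => hP.1 _ _
    have hnn1 : (0:ℝ) ≤ ∏ t ∈ Finset.range (3*m), P (q s t) (q s (t+1)) :=
      Finset.prod_nonneg fun i _ => hP.1 _ _
    calc (∏ t ∈ Finset.range (3*m), P (q s t) (q s (t+1))) *
          ∏ i ∈ Finset.range k, P (q s (3*m+i)) (q s (3*m+i+1))
        ≤ (1/4:ℝ)^m * 1 := mul_le_mul h1 h2 hnn (by positivity)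
      _ = (1/4:ℝ)^m := mul_one _
  have hprodnn : (0:ℝ) ≤ ∏ t : Fin n, P (pat s n t.castSucc) (pat s n t.succ) :=
    Finset.prod_nonneg fun i _ => hP.1 _ _
  calc chainWt ν P (pat s n)
      = ν (pat s n 0) * ∏ t : Fin n, P (pat s n t.castSucc) (pat s n t.succ) := rfl
    _ ≤ 1 * ((1/4:ℝ)^(n/3)) := mul_le_mul hν1 hprod hprodnn one_pos.le
    _ = (1/4:ℝ)^(n/3) := one_mul _

lemma chainWt_nonneg (hP : IsStochastic P) (hν : IsInvProb ν P) {n : ℕ}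
    (w : Fin (n+1) → Fin 2) : 0 ≤ chainWt ν P w :=
  mul_nonneg (hν.1 _) (Finset.prod_nonneg fun i _ => hP.1 _ _)

lemma sum_bound (hP : IsStochastic P) (hν : IsInvProb ν P) (n : ℕ) :
    ∑ w : Fin (n + 1) → Fin 2, chainWt ν P w * ‖prodW AA w‖ ^ (((n : ℝ) + 1)⁻¹)
      ≤ 3 * (1/4 : ℝ)^(n/3) := by
  set f : (Fin (n+1) → Fin 2) → ℝ :=
    fun w => chainWt ν P w * ‖prodW AA w‖ ^ (((n : ℝ) + 1)⁻¹) with hf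
  have hfle : ∀ w, f w ≠ 0 → f w ≤ (1/4 : ℝ)^(n/3) := by
    intro w hw
    have hprodne : prodW AA w ≠ 0 := by
      intro hz
      apply hw
      rw [hf]
      simp only
      rw [hz]
      rw [norm_zero, Real.zero_rpow (by positivity), mul_zero]
    obtain ⟨s, rfl⟩ := classify w hprodne
    calc f (pat s n) ≤ chainWt ν P (pat s n) * 1 := by
          apply mul_le_mul_of_nonneg_left _ (chainWt_nonneg hP hν _)
          exact Real.rpow_le_one (norm_nonneg _) (norm_prodW_le _) (by positivity)
      _ = chainWt ν P (pat s n) := mul_one _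
      _ ≤ (1/4 : ℝ)^(n/3) := chainWt_pat_le hP hν s n
  have hsub : Finset.univ.filter (fun w => f w ≠ 0) ⊆ {pat 0 n, pat 1 n, pat 2 n} := by
    intro w hw
    rw [Finset.mem_filter] at hw
    have hprodne : prodW AA w ≠ 0 := by
      intro hz
      apply hw.2
      rw [hf]; simp only; rw [hz, norm_zero, Real.zero_rpow (by positivity), mul_zero]
    obtain ⟨s, rfl⟩ := classify w hprodne
    have hlt := s.isLt
    rcases (by omega : s.1 = 0 ∨ s.1 = 1 ∨ s.1 = 2) with hv | hv | hv <;>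
      [(have : s = 0 := Fin.ext hv); (have : s = 1 := Fin.ext hv); (have : s = 2 := Fin.ext hv)] <;>
      subst this <;> simp
  calc ∑ w : Fin (n + 1) → Fin 2, f w
      = ∑ w ∈ Finset.univ.filter (fun w => f w ≠ 0), f w :=
        (Finset.sum_filter_ne_zero _).symm
    _ ≤ (Finset.univ.filter (fun w => f w ≠ 0)).card • ((1/4 : ℝ)^(n/3)) := by
        apply Finset.sum_le_card_nsmul
        intro w hw
        exact hfle w (Finset.mem_filter.mp hw).2
    _ ≤ 3 * (1/4 : ℝ)^(n/3) := by
        rw [nsmul_eq_mul]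
        apply mul_le_mul_of_nonneg_right _ (by positivity)
        have hcard : (Finset.univ.filter (fun w => f w ≠ 0)).card ≤ 3 := by
          calc (Finset.univ.filter (fun w => f w ≠ 0)).card
              ≤ ({pat 0 n, pat 1 n, pat 2 n} : Finset (Fin (n+1) → Fin 2)).card :=
                Finset.card_le_card hsub
            _ ≤ 3 := by
                apply le_trans (Finset.card_insert_le _ _)
                apply Nat.succ_le_succ
                apply le_trans (Finset.card_insert_le _ _)
                simp
        exact_mod_cast hcard

lemma rhoP_AA (hP : IsStochastic P) (hν : IsInvProb ν P) : rhoP ν P AA = 0 := by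
  rw [rhoP]
  have htend : Filter.Tendsto (fun n : ℕ =>
      ∑ w : Fin (n + 1) → Fin 2, chainWt ν P w * ‖prodW AA w‖ ^ (((n : ℝ) + 1)⁻¹))
      Filter.atTop (nhds 0) := by
    apply squeeze_zero
    · intro n
      apply Finset.sum_nonneg
      intro w _
      exact mul_nonneg (chainWt_nonneg hP hν w) (Real.rpow_nonneg (norm_nonneg _) _)
    · exact fun n => sum_bound hP hν n
    · have h1 : Filter.Tendsto (fun m : ℕ => ((1:ℝ)/4)^m) Filter.atTop (nhds 0) :=
        tendsto_pow_atTop_nhds_zero_of_lt_one (by norm_num) (by norm_num)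
      have h2 : Filter.Tendsto (fun n : ℕ => n / 3) Filter.atTop Filter.atTop := by
        apply Filter.tendsto_atTop.mpr
        intro b
        filter_upwards [Filter.eventually_ge_atTop (3*b)] with n hn
        omega
      have := (h1.comp h2).const_mul (3:ℝ)
      simpa using this
  exact htend.limsup_eq
end Prob


lemma stoch_one : IsStochastic (1 : Matrix (Fin 2) (Fin 2) ℝ) := by
  constructor
  · intro i j
    rw [Matrix.one_apply]
    split <;> norm_num
  · intro i
    fin_cases i <;> simp [Fin.sum_univ_two, Matrix.one_apply]

lemma inv_one : IsInvProb ![1/2, 1/2] (1 : Matrix (Fin 2) (Fin 2) ℝ) := by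
  refine ⟨?_, ?_, ?_⟩
  · intro i; fin_cases i <;> norm_num
  · simp [Fin.sum_univ_two]; norm_num
  · intro j
    fin_cases j <;> simp [Fin.sum_univ_two, Matrix.one_apply]


end Aux15

/-- an explicit pair of `3 × 3` matrices with `ρ_d(A) = 1` and
`ρ_p(ν, P, A) = 0` for every Markov chain `(ν, P)`, so that `ρ_p(A) = 0 < ρ_d(A)`. -/
theorem example_rhoPsup_lt_jsr :
    jsr ![(!![0, 1, 0; 0, 0, 1; 0, 0, 0] : Matrix (Fin 3) (Fin 3) ℝ),
         (!![0, 0, 0; 0, 0, 0; 1, 0, 0] : Matrix (Fin 3) (Fin 3) ℝ)] = 1 ∧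
      (∀ (P : Matrix (Fin 2) (Fin 2) ℝ) (ν : Fin 2 → ℝ),
        IsStochastic P → IsInvProb ν P →
        rhoP ν P ![(!![0, 1, 0; 0, 0, 1; 0, 0, 0] : Matrix (Fin 3) (Fin 3) ℝ),
                   (!![0, 0, 0; 0, 0, 0; 1, 0, 0] : Matrix (Fin 3) (Fin 3) ℝ)] = 0) ∧
      rhoPsup ![(!![0, 1, 0; 0, 0, 1; 0, 0, 0] : Matrix (Fin 3) (Fin 3) ℝ),
                (!![0, 0, 0; 0, 0, 0; 1, 0, 0] : Matrix (Fin 3) (Fin 3) ℝ)] = 0 := by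
  refine ⟨jsr_AA, fun P ν hP hν => rhoP_AA hP hν, ?_⟩
  have hset : {r | ∃ (ν : Fin 2 → ℝ) (P : Matrix (Fin 2) (Fin 2) ℝ),
      IsStochastic P ∧ IsInvProb ν P ∧ r = rhoP ν P AA} = {0} := by
    ext r
    simp only [Set.mem_setOf_eq, Set.mem_singleton_iff]
    constructor
    · rintro ⟨ν, P, hP, hν, rfl⟩
      exact rhoP_AA hP hν
    · rintro rfl
      exact ⟨![1/2, 1/2], 1, stoch_one, inv_one, (rhoP_AA stoch_one inv_one).symm⟩
  show rhoPsup AA = 0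
  rw [rhoPsup, hset, csSup_singleton]


end JSRpaper
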